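/- Let (f,g) ∈ 𝒞₁(I). If there exists a differentiable h : I → ℝ with nonvanishing derivative and real constants a, b, c, d with ad ≠ bc such that f' = (−a·sin∘h + b·cos∘h)·h' and g' = (−c·sin∘h + d·cos∘h)·h', then the Cauchy mean C_{f,g} equals the quasiarithmetic mean A_h on I². -/

import Mathlib

/-- The two-variable Cauchy mean generated by `f` and `g` on `I`. -/
noncomputable def cauchyMean (I : Set ℝ) (f g : ℝ → ℝ) (x y : ℝ) : ℝ :=
  if x = y then x
  else Function.invFunOn (fun t => deriv f t / deriv g t) I ((f x - f y) / (g x - g y))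

/-- The two-variable quasiarithmetic mean generated by `h` on `I`. -/
noncomputable def quasiMean (I : Set ℝ) (h : ℝ → ℝ) (x y : ℝ) : ℝ :=
  Function.invFunOn h I ((h x + h y) / 2)

/-- A differentiable function with nowhere-vanishing derivative on an open convex set is
injective there (by Darboux, the derivative has constant sign). -/
lemma injOn_of_deriv_ne_zero_aux {I : Set ℝ} (hI : IsOpen I) (hc : Convex ℝ I)
    {φ : ℝ → ℝ} (hd : DifferentiableOn ℝ φ I) (hφ' : ∀ x ∈ I, deriv φ x ≠ 0) :
    Set.InjOn φ I := by
  have hder : ∀ x ∈ I, HasDerivWithinAt φ (deriv φ x) I x := fun x hx =>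
    ((hd.differentiableAt (hI.mem_nhds hx)).hasDerivAt).hasDerivWithinAt
  have hint : interior I = I := hI.interior_eq
  have hcont : ContinuousOn φ I := hd.continuousOn
  rcases hasDerivWithinAt_forall_lt_or_forall_gt_of_forall_ne hc hder hφ' with hneg | hpos
  · exact (strictAntiOn_of_deriv_neg hc hcont (fun x hx => hneg x (hint ▸ hx))).injOn
  · exact (strictMonoOn_of_deriv_pos hc hcont (fun x hx => hpos x (hint ▸ hx))).injOn

/-- A function with zero derivative on an open convex set is constant there. -/
lemma const_of_hasDerivAt_zero_aux {I : Set ℝ} (hI : IsOpen I) (hc : Convex ℝ I)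
    {φ : ℝ → ℝ} (hd : ∀ t ∈ I, HasDerivAt φ 0 t) {x y : ℝ} (hx : x ∈ I) (hy : y ∈ I) :
    φ x = φ y := by
  have hdiff : DifferentiableOn ℝ φ I := fun t ht =>
    ((hd t ht).differentiableAt).differentiableWithinAt
  refine hc.is_const_of_fderivWithin_eq_zero hdiff (fun t ht => ?_) hx hy
  have h1 : fderiv ℝ φ t = 0 := by
    apply ContinuousLinearMap.ext_ring
    have : deriv φ t = 0 := (hd t ht).deriv
    simp [fderiv_apply_one_eq_deriv, this]
  rw [fderivWithin_of_isOpen hI ht, h1]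

/-- If `(f', g') ∼ (h'·sin∘h, h'·cos∘h)` (trigonometric case, p = −1), then the Cauchy
mean `C_{f,g}` equals the quasiarithmetic mean `A_h` on I². -/
theorem cauchyMean_eq_quasiMean_of_trig
    (I : Set ℝ) (hI : IsOpen I) (hIc : I.OrdConnected) (hne : I.Nonempty)
    (f g : ℝ → ℝ)
    (hf : ContDiffOn ℝ 1 f I) (hg : ContDiffOn ℝ 1 g I)
    (hg' : ∀ x ∈ I, deriv g x ≠ 0)
    (hmono : StrictMonoOn (fun x => deriv f x / deriv g x) I ∨
             StrictAntiOn (fun x => deriv f x / deriv g x) I)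
    (h : ℝ → ℝ) (hhd : DifferentiableOn ℝ h I) (hh' : ∀ x ∈ I, deriv h x ≠ 0)
    (a b c d : ℝ) (habcd : a * d ≠ b * c)
    (hf' : ∀ x ∈ I,
      deriv f x = (-a * Real.sin (h x) + b * Real.cos (h x)) * deriv h x)
    (hg'eq : ∀ x ∈ I,
      deriv g x = (-c * Real.sin (h x) + d * Real.cos (h x)) * deriv h x) :
    ∀ x ∈ I, ∀ y ∈ I, cauchyMean I f g x y = quasiMean I h x y := by
  have hconv : Convex ℝ I := hIc.convex
  have hinjh : Set.InjOn h I := injOn_of_deriv_ne_zero_aux hI hconv hhd hh'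
  have hinjg : Set.InjOn g I :=
    injOn_of_deriv_ne_zero_aux hI hconv (hg.differentiableOn one_ne_zero) hg'
  have hinjr : Set.InjOn (fun t => deriv f t / deriv g t) I := by
    rcases hmono with hm | hm
    · exact hm.injOn
    · exact hm.injOn
  intro x hx y hy
  by_cases hxy : x = y
  · subst hxy
    have : (h x + h x) / 2 = h x := by ring
    simp only [cauchyMean, quasiMean, if_pos rfl, this]
    exact (hinjh.leftInvOn_invFunOn hx).symm
  -- set up midpoint
  set u := h x with hu
  set v := h y with hv
  set m := (u + v) / 2 with hm
  -- find z ∈ I with h z = m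
  have hcontI : ContinuousOn h I := hhd.continuousOn
  have hzex : ∃ z ∈ I, h z = m := by
    rcases le_total u v with huv | huv
    · have : m ∈ Set.Icc (h x) (h y) := ⟨by rw [hm]; linarith, by rw [hm]; linarith⟩
      obtain ⟨z, hz, hz'⟩ := hconv.isPreconnected.intermediate_value hx hy hcontI this
      exact ⟨z, hz, hz'⟩
    · have : m ∈ Set.Icc (h y) (h x) := ⟨by rw [hm]; linarith, by rw [hm]; linarith⟩
      obtain ⟨z, hz, hz'⟩ := hconv.isPreconnected.intermediate_value hy hx hcontI this
      exact ⟨z, hz, hz'⟩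
  obtain ⟨z, hzI, hz⟩ := hzex
  -- primitives
  set F : ℝ → ℝ := fun t => a * Real.cos (h t) + b * Real.sin (h t) with hF
  set G : ℝ → ℝ := fun t => c * Real.cos (h t) + d * Real.sin (h t) with hG
  have hderF : ∀ t ∈ I, HasDerivAt F
      ((-a * Real.sin (h t) + b * Real.cos (h t)) * deriv h t) t := by
    intro t ht
    have hht : HasDerivAt h (deriv h t) t :=
      (hhd.differentiableAt (hI.mem_nhds ht)).hasDerivAt
    have hcos : HasDerivAt (fun s => Real.cos (h s)) (-Real.sin (h t) * deriv h t) t :=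
      (Real.hasDerivAt_cos (h t)).comp t hht
    have hsin : HasDerivAt (fun s => Real.sin (h s)) (Real.cos (h t) * deriv h t) t :=
      (Real.hasDerivAt_sin (h t)).comp t hht
    have : HasDerivAt F (a * (-Real.sin (h t) * deriv h t) + b * (Real.cos (h t) * deriv h t)) t :=
      (hcos.const_mul a).add (hsin.const_mul b)
    convert this using 1
    ring
  have hderG : ∀ t ∈ I, HasDerivAt G
      ((-c * Real.sin (h t) + d * Real.cos (h t)) * deriv h t) t := by
    intro t ht
    have hht : HasDerivAt h (deriv h t) t :=
      (hhd.differentiableAt (hI.mem_nhds ht)).hasDerivAt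
    have hcos : HasDerivAt (fun s => Real.cos (h s)) (-Real.sin (h t) * deriv h t) t :=
      (Real.hasDerivAt_cos (h t)).comp t hht
    have hsin : HasDerivAt (fun s => Real.sin (h s)) (Real.cos (h t) * deriv h t) t :=
      (Real.hasDerivAt_sin (h t)).comp t hht
    have : HasDerivAt G (c * (-Real.sin (h t) * deriv h t) + d * (Real.cos (h t) * deriv h t)) t :=
      (hcos.const_mul c).add (hsin.const_mul d)
    convert this using 1
    ring
  -- f - F and g - G are constant on I
  have hfF : f x - f y = F x - F y := by
    have hφ : ∀ t ∈ I, HasDerivAt (fun s => f s - F s) 0 t := by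
      intro t ht
      have hft : HasDerivAt f (deriv f t) t :=
        ((hf.differentiableOn one_ne_zero).differentiableAt (hI.mem_nhds ht)).hasDerivAt
      have : HasDerivAt (fun s => f s - F s) (deriv f t -
          (-a * Real.sin (h t) + b * Real.cos (h t)) * deriv h t) t := hft.sub (hderF t ht)
      convert this using 1
      rw [hf' t ht]; ring
    have := const_of_hasDerivAt_zero_aux hI hconv hφ hx hy
    linarith [this]
  have hgG : g x - g y = G x - G y := by
    have hφ : ∀ t ∈ I, HasDerivAt (fun s => g s - G s) 0 t := by
      intro t ht
      have hgt : HasDerivAt g (deriv g t) t :=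
        ((hg.differentiableOn one_ne_zero).differentiableAt (hI.mem_nhds ht)).hasDerivAt
      have : HasDerivAt (fun s => g s - G s) (deriv g t -
          (-c * Real.sin (h t) + d * Real.cos (h t)) * deriv h t) t := hgt.sub (hderG t ht)
      convert this using 1
      rw [hg'eq t ht]; ring
    have := const_of_hasDerivAt_zero_aux hI hconv hφ hx hy
    linarith [this]
  -- trig identities
  set δ := (u - v) / 2 with hδ
  have hFkey : F x - F y = 2 * Real.sin δ * (-a * Real.sin m + b * Real.cos m) := by
    have h1 : Real.cos u - Real.cos v = -2 * Real.sin m * Real.sin δ := Real.cos_sub_cos u v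
    have h2 : Real.sin u - Real.sin v = 2 * Real.sin δ * Real.cos m := Real.sin_sub_sin u v
    have : F x - F y = a * (Real.cos u - Real.cos v) + b * (Real.sin u - Real.sin v) := by
      simp only [hF]; ring
    rw [this, h1, h2]; ring
  have hGkey : G x - G y = 2 * Real.sin δ * (-c * Real.sin m + d * Real.cos m) := by
    have h1 : Real.cos u - Real.cos v = -2 * Real.sin m * Real.sin δ := Real.cos_sub_cos u v
    have h2 : Real.sin u - Real.sin v = 2 * Real.sin δ * Real.cos m := Real.sin_sub_sin u v
    have : G x - G y = c * (Real.cos u - Real.cos v) + d * (Real.sin u - Real.sin v) := by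
      simp only [hG]; ring
    rw [this, h1, h2]; ring
  -- g x ≠ g y
  have hgxy : g x - g y ≠ 0 := sub_ne_zero.mpr (fun hgg => hxy (hinjg hx hy hgg))
  have hsinδ : Real.sin δ ≠ 0 := by
    intro h0
    apply hgxy
    rw [hgG, hGkey, h0]; ring
  have hGden : -c * Real.sin m + d * Real.cos m ≠ 0 := by
    intro h0
    apply hgxy
    rw [hgG, hGkey, h0]; ring
  -- the ratio equals deriv f z / deriv g z
  have hratio : (f x - f y) / (g x - g y) = deriv f z / deriv g z := by
    rw [hfF, hgG, hFkey, hGkey, hf' z hzI, hg'eq z hzI, hz]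
    rw [mul_div_mul_right _ _ (hh' z hzI)]
    rw [mul_comm (2 * Real.sin δ) (-a * Real.sin m + b * Real.cos m),
        mul_comm (2 * Real.sin δ) (-c * Real.sin m + d * Real.cos m)]
    rw [mul_div_mul_right _ _ (mul_ne_zero two_ne_zero hsinδ)]
  -- conclude
  have hcm : cauchyMean I f g x y = z := by
    rw [cauchyMean, if_neg hxy, hratio]
    have : deriv f z / deriv g z = (fun t => deriv f t / deriv g t) z := rfl
    rw [this]
    exact hinjr.leftInvOn_invFunOn hzI
  have hqm : quasiMean I h x y = z := by
    rw [quasiMean]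
    have : (h x + h y) / 2 = h z := by rw [hz, hm]
    rw [this]
    exact hinjh.leftInvOn_invFunOn hzI
  rw [hcm, hqm]
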